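/- Let d, k_1, …, k_d be positive integers with k_d ≡ 0 (mod 4) and k_i ≡ 0 (mod 2d) for all i < d. Then the d-dimensional torus C_{k_1} □ … □ C_{k_d} has total domatic number exactly 2d. Consequently its total domination number equals (k_1·k_2·⋯·k_d)/(2d). -/

import Mathlib

open SimpleGraph Finset

/-- A domatic `k`-coloring: every vertex sees all `k` colors in its closed neighborhood. -/
def IsDomaticColoring {V : Type*} (G : SimpleGraph V) (k : ℕ) (f : V → Fin k) : Prop :=
  ∀ v : V, ∀ c : Fin k, ∃ u : V, (u = v ∨ G.Adj v u) ∧ f u = c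

/-- A total domatic `k`-coloring: every vertex sees all `k` colors in its open neighborhood. -/
def IsTotalDomaticColoring {V : Type*} (G : SimpleGraph V) (k : ℕ) (f : V → Fin k) : Prop :=
  ∀ v : V, ∀ c : Fin k, ∃ u : V, G.Adj v u ∧ f u = c

/-- The domatic number `d(G)`. -/
noncomputable def domaticNumber {V : Type*} (G : SimpleGraph V) : ℕ :=
  sSup {k | ∃ f : V → Fin k, IsDomaticColoring G k f}

/-- The total domatic number `d_t(G)`. -/
noncomputable def totalDomaticNumber {V : Type*} (G : SimpleGraph V) : ℕ :=
  sSup {k | ∃ f : V → Fin k, IsTotalDomaticColoring G k f}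

def IsDominatingSet {V : Type*} (G : SimpleGraph V) (D : Set V) : Prop :=
  ∀ v : V, v ∈ D ∨ ∃ u ∈ D, G.Adj v u

def IsTotalDominatingSet {V : Type*} (G : SimpleGraph V) (D : Set V) : Prop :=
  ∀ v : V, ∃ u ∈ D, G.Adj v u

noncomputable def dominationNumber {V : Type*} (G : SimpleGraph V) [Fintype V] : ℕ :=
  sInf {n | ∃ D : Finset V, D.card = n ∧ IsDominatingSet G ↑D}

noncomputable def totalDominationNumber {V : Type*} (G : SimpleGraph V) [Fintype V] : ℕ :=
  sInf {n | ∃ D : Finset V, D.card = n ∧ IsTotalDominatingSet G ↑D}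

/-- An injective `k`-coloring: vertices with a common neighbor get distinct colors. -/
def IsInjectiveColoring {V : Type*} (G : SimpleGraph V) (k : ℕ) (f : V → Fin k) : Prop :=
  ∀ u w v : V, G.Adj v u → G.Adj v w → u ≠ w → f u ≠ f w

noncomputable def injChromaticNumber {V : Type*} (G : SimpleGraph V) : ℕ :=
  sInf {k | ∃ f : V → Fin k, IsInjectiveColoring G k f}

def NoIsolated {V : Type*} (G : SimpleGraph V) : Prop := ∀ v : V, ∃ u, G.Adj v u

/-- The Hamming graph `H(n,q)`: vertices differ in exactly one coordinate. -/
def hammingGraph (n q : ℕ) : SimpleGraph (Fin n → Fin q) :=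
  SimpleGraph.fromRel (fun x y => ∃ i, x i ≠ y i ∧ ∀ j, j ≠ i → x j = y j)

/-- The hypercube `Q n`. -/
def hypercube (n : ℕ) : SimpleGraph (Fin n → Fin 2) := hammingGraph n 2

/-- The torus `C_{k 0} □ ⋯ □ C_{k (d-1)}`. -/
def torusGraph (d : ℕ) (k : Fin d → ℕ) : SimpleGraph (∀ i : Fin d, ZMod (k i)) :=
  SimpleGraph.fromRel (fun x y => ∃ i, x i = y i + 1 ∧ ∀ j, j ≠ i → x j = y j)

lemma hdvd4_of_not_lt (d : ℕ) (hd : 0 < d) (k : Fin d → ℕ)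
    (hlast : 4 ∣ k ⟨d - 1, Nat.sub_lt hd Nat.one_pos⟩) (i : Fin d) (h : ¬ (i : ℕ) < d - 1) : 4 ∣ k i := by
  have hi : i = (⟨d - 1, Nat.sub_lt hd Nat.one_pos⟩ : Fin d) := Fin.ext (by have := i.isLt; simp only [Fin.val_mk]; omega)
  rw [hi]; exact hlast

lemma torus_adj_up (d : ℕ) (k : Fin d → ℕ) [∀ i, NeZero (k i)] (hk : ∀ i, 2 ≤ k i)
    (x : ∀ i, ZMod (k i)) (i : Fin d) :
    (torusGraph d k).Adj x (Function.update x i (x i + 1)) := by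
  haveI : Fact (1 < k i) := ⟨hk i⟩
  simp only [torusGraph, SimpleGraph.fromRel_adj]
  refine ⟨?_, Or.inr ⟨i, ?_, ?_⟩⟩
  · intro hcontra
    have h1 : x i = x i + 1 := by
      have := congrFun hcontra i
      simpa [Function.update_self] using this
    have : (1 : ZMod (k i)) = 0 := by linear_combination -h1
    exact one_ne_zero this
  · simp [Function.update_self]
  · intro j hj; simp [Function.update_of_ne hj]

lemma torus_adj_down (d : ℕ) (k : Fin d → ℕ) [∀ i, NeZero (k i)] (hk : ∀ i, 2 ≤ k i)
    (x : ∀ i, ZMod (k i)) (i : Fin d) :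
    (torusGraph d k).Adj x (Function.update x i (x i - 1)) := by
  haveI : Fact (1 < k i) := ⟨hk i⟩
  simp only [torusGraph, SimpleGraph.fromRel_adj]
  refine ⟨?_, Or.inl ⟨i, ?_, ?_⟩⟩
  · intro hcontra
    have h1 : x i = x i - 1 := by
      have := congrFun hcontra i
      simpa [Function.update_self] using this
    have : (1 : ZMod (k i)) = 0 := by linear_combination h1
    exact one_ne_zero this
  · simp [Function.update_self]
  · intro j hj; simp [Function.update_of_ne hj]

lemma torus_adj_dest (d : ℕ) (k : Fin d → ℕ) (x u : ∀ i, ZMod (k i))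
    (h : (torusGraph d k).Adj x u) :
    ∃ i, u = Function.update x i (x i + 1) ∨ u = Function.update x i (x i - 1) := by
  simp only [torusGraph, SimpleGraph.fromRel_adj] at h
  obtain ⟨-, h | h⟩ := h
  · obtain ⟨i, hi, hj⟩ := h
    refine ⟨i, Or.inr (funext fun j => ?_)⟩
    by_cases hji : j = i
    · subst hji; rw [Function.update_self]; linear_combination -hi
    · rw [Function.update_of_ne hji, (hj j hji).symm]
  · obtain ⟨i, hi, hj⟩ := h
    refine ⟨i, Or.inl (funext fun j => ?_)⟩
    by_cases hji : j = i
    · subst hji; rw [Function.update_self]; exact hi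
    · rw [Function.update_of_ne hji, hj j hji]

lemma torus_nbr (d : ℕ) (k : Fin d → ℕ) [∀ i, NeZero (k i)] (x : ∀ i, ZMod (k i)) :
    ∃ S : Finset (∀ i, ZMod (k i)), S.card ≤ 2 * d ∧
      ∀ u, (torusGraph d k).Adj x u → u ∈ S := by
  classical
  refine ⟨Finset.image
      (fun p : Fin d × Bool => Function.update x p.1 (x p.1 + if p.2 then 1 else -1))
      Finset.univ, ?_, ?_⟩
  · refine le_trans Finset.card_image_le ?_
    rw [Finset.card_univ, Fintype.card_prod, Fintype.card_fin, Fintype.card_bool]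
    omega
  · intro u hu
    obtain ⟨i, h | h⟩ := torus_adj_dest d k x u hu
    · exact Finset.mem_image.mpr ⟨(i, true), Finset.mem_univ _, by simp [h.symm]⟩
    · exact Finset.mem_image.mpr ⟨(i, false), Finset.mem_univ _, by rw [h]; simp [sub_eq_add_neg]⟩

noncomputable def wfun (d : ℕ) (hd : 0 < d) (k : Fin d → ℕ) (hlast : 4 ∣ k ⟨d - 1, Nat.sub_lt hd Nat.one_pos⟩)
    (hrest : ∀ i : Fin d, (i : ℕ) < d - 1 → 2 * d ∣ k i) (i : Fin d) (t : ZMod (k i)) :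
    ZMod (2 * d) :=
  if h : (i : ℕ) < d - 1 then
    (((i : ℕ) + 1 : ℕ) : ZMod (2 * d)) * ZMod.castHom (hrest i h) (ZMod (2 * d)) t
  else
    (d : ZMod (2 * d)) *
      ((((ZMod.castHom (hdvd4_of_not_lt d hd k hlast i h) (ZMod 4) t).val / 2 : ℕ)) : ZMod (2 * d))

lemma wfun_rest (d : ℕ) (hd : 0 < d) (k : Fin d → ℕ) (hlast : 4 ∣ k ⟨d - 1, Nat.sub_lt hd Nat.one_pos⟩)
    (hrest : ∀ i : Fin d, (i : ℕ) < d - 1 → 2 * d ∣ k i) (i : Fin d)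
    (h : (i : ℕ) < d - 1) (t : ZMod (k i)) :
    wfun d hd k hlast hrest i (t + 1) = wfun d hd k hlast hrest i t + (((i : ℕ) + 1 : ℕ) : ZMod (2 * d)) ∧
    wfun d hd k hlast hrest i (t - 1) = wfun d hd k hlast hrest i t - (((i : ℕ) + 1 : ℕ) : ZMod (2 * d)) := by
  simp only [wfun, dif_pos h, map_add, map_sub, map_one]
  constructor <;> push_cast <;> ring

lemma wfun_last (d : ℕ) (hd : 0 < d) (k : Fin d → ℕ) (hlast : 4 ∣ k ⟨d - 1, Nat.sub_lt hd Nat.one_pos⟩)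
    (hrest : ∀ i : Fin d, (i : ℕ) < d - 1 → 2 * d ∣ k i) (i : Fin d)
    (h : ¬ (i : ℕ) < d - 1) (t : ZMod (k i)) :
    (wfun d hd k hlast hrest i (t + 1) = wfun d hd k hlast hrest i t ∧
     wfun d hd k hlast hrest i (t - 1) = wfun d hd k hlast hrest i t + (d : ZMod (2 * d))) ∨
    (wfun d hd k hlast hrest i (t + 1) = wfun d hd k hlast hrest i t + (d : ZMod (2 * d)) ∧
     wfun d hd k hlast hrest i (t - 1) = wfun d hd k hlast hrest i t) := by
  have h2d : ((2 * d : ℕ) : ZMod (2 * d)) = 0 := ZMod.natCast_self _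
  simp only [wfun, dif_neg h, map_add, map_sub, map_one]
  set c := ZMod.castHom (hdvd4_of_not_lt d hd k hlast i h) (ZMod 4) t with hc
  have hc4 : c = 0 ∨ c = 1 ∨ c = 2 ∨ c = 3 := by
    have : ∀ z : ZMod 4, z = 0 ∨ z = 1 ∨ z = 2 ∨ z = 3 := by decide
    exact this c
  rcases hc4 with h0 | h0 | h0 | h0 <;> rw [h0]
  · left
    have e1 : ((0 : ZMod 4) + 1).val / 2 = 0 := by decide
    have e2 : ((0 : ZMod 4) - 1).val / 2 = 1 := by decide
    have e3 : (0 : ZMod 4).val / 2 = 0 := by decide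
    rw [e1, e2, e3]
    constructor
    · rfl
    · push_cast; ring
  · right
    have e1 : ((1 : ZMod 4) + 1).val / 2 = 1 := by decide
    have e2 : ((1 : ZMod 4) - 1).val / 2 = 0 := by decide
    have e3 : (1 : ZMod 4).val / 2 = 0 := by decide
    rw [e1, e2, e3]
    constructor
    · push_cast; ring
    · rfl
  · left
    have e1 : ((2 : ZMod 4) + 1).val / 2 = 1 := by decide
    have e2 : ((2 : ZMod 4) - 1).val / 2 = 0 := by decide
    have e3 : (2 : ZMod 4).val / 2 = 1 := by decide
    rw [e1, e2, e3]
    constructor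
    · rfl
    · push_cast at h2d ⊢; linear_combination -h2d
  · right
    have e1 : ((3 : ZMod 4) + 1).val / 2 = 0 := by decide
    have e2 : ((3 : ZMod 4) - 1).val / 2 = 1 := by decide
    have e3 : (3 : ZMod 4).val / 2 = 1 := by decide
    rw [e1, e2, e3]
    constructor
    · push_cast at h2d ⊢; linear_combination -h2d
    · rfl

lemma sum_wfun_update (d : ℕ) (hd : 0 < d) (k : Fin d → ℕ) (hlast : 4 ∣ k ⟨d - 1, Nat.sub_lt hd Nat.one_pos⟩)
    (hrest : ∀ i : Fin d, (i : ℕ) < d - 1 → 2 * d ∣ k i) (x : ∀ i, ZMod (k i))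
    (i : Fin d) (a : ZMod (k i)) :
    ∑ j, wfun d hd k hlast hrest j (Function.update x i a j)
      = ∑ j, wfun d hd k hlast hrest j (x j)
        - wfun d hd k hlast hrest i (x i) + wfun d hd k hlast hrest i a := by
  classical
  rw [← Finset.add_sum_erase _ (fun j => wfun d hd k hlast hrest j (Function.update x i a j))
      (Finset.mem_univ i),
    ← Finset.add_sum_erase _ (fun j => wfun d hd k hlast hrest j (x j)) (Finset.mem_univ i)]
  have hrw : ∑ j ∈ Finset.univ.erase i, wfun d hd k hlast hrest j (Function.update x i a j)
      = ∑ j ∈ Finset.univ.erase i, wfun d hd k hlast hrest j (x j) :=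
    Finset.sum_congr rfl fun j hj => by
      rw [Function.update_of_ne (Finset.ne_of_mem_erase hj)]
  rw [hrw, Function.update_self]
  ring

lemma torus_exists_coloring (d : ℕ) (hd : 0 < d) (k : Fin d → ℕ) (hpos : ∀ i, 0 < k i)
    [∀ i, NeZero (k i)] (hlast : 4 ∣ k ⟨d - 1, Nat.sub_lt hd Nat.one_pos⟩)
    (hrest : ∀ i : Fin d, (i : ℕ) < d - 1 → 2 * d ∣ k i) :
    ∃ F : (∀ i : Fin d, ZMod (k i)) → ZMod (2 * d),
      ∀ x δ, ∃ u, (torusGraph d k).Adj x u ∧ F u = δ := by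
  classical
  haveI : NeZero (2 * d) := ⟨by omega⟩
  have hk2 : ∀ i, 2 ≤ k i := fun i => by
    by_cases h : (i : ℕ) < d - 1
    · exact le_trans (by omega) (Nat.le_of_dvd (hpos i) (hrest i h))
    · exact le_trans (by omega) (Nat.le_of_dvd (hpos i) (hdvd4_of_not_lt d hd k hlast i h))
  refine ⟨fun x => ∑ j, wfun d hd k hlast hrest j (x j), ?_⟩
  intro x δ
  set e := δ - ∑ j, wfun d hd k hlast hrest j (x j) with he
  have hme : ((e.val : ℕ) : ZMod (2 * d)) = e := by
    simp [ZMod.natCast_val, ZMod.cast_id]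
  have hmlt : e.val < 2 * d := ZMod.val_lt e
  set m := e.val with hm
  have hgoal : ∀ u : ∀ i, ZMod (k i),
      (∑ j, wfun d hd k hlast hrest j (u j)) = (∑ j, wfun d hd k hlast hrest j (x j)) + e →
      (∑ j, wfun d hd k hlast hrest j (u j)) = δ := by
    intro u h; rw [h, he]; ring
  by_cases h0 : m = 0 ∨ m = d
  · have hdd : d - 1 < d := by omega
    have hni : ¬ ((⟨d - 1, hdd⟩ : Fin d) : ℕ) < d - 1 := by
      simp only [Fin.val_mk]; omega
    have he0 : e = 0 ∨ e = (d : ZMod (2 * d)) := by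
      rcases h0 with h | h
      · left; rw [← hme, h]; simp
      · right; rw [← hme, h]
    rcases wfun_last d hd k hlast hrest ⟨d - 1, hdd⟩ hni (x ⟨d - 1, hdd⟩) with ⟨hp, hq⟩ | ⟨hp, hq⟩ <;>
      rcases he0 with h | h
    · refine ⟨Function.update x ⟨d - 1, hdd⟩ (x ⟨d - 1, hdd⟩ + 1),
        torus_adj_up d k hk2 x _, hgoal _ ?_⟩
      rw [sum_wfun_update, hp, h]; ring
    · refine ⟨Function.update x ⟨d - 1, hdd⟩ (x ⟨d - 1, hdd⟩ - 1),
        torus_adj_down d k hk2 x _, hgoal _ ?_⟩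
      rw [sum_wfun_update, hq, h]; ring
    · refine ⟨Function.update x ⟨d - 1, hdd⟩ (x ⟨d - 1, hdd⟩ - 1),
        torus_adj_down d k hk2 x _, hgoal _ ?_⟩
      rw [sum_wfun_update, hq, h]; ring
    · refine ⟨Function.update x ⟨d - 1, hdd⟩ (x ⟨d - 1, hdd⟩ + 1),
        torus_adj_up d k hk2 x _, hgoal _ ?_⟩
      rw [sum_wfun_update, hp, h]; ring
  · push_neg at h0
    by_cases hlt : m < d
    · have hm1 : 1 ≤ m := by omega
      have hik : m - 1 < d := by omega
      have hni : ((⟨m - 1, hik⟩ : Fin d) : ℕ) < d - 1 := by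
        simp only [Fin.val_mk]; omega
      obtain ⟨hp, -⟩ := wfun_rest d hd k hlast hrest ⟨m - 1, hik⟩ hni (x ⟨m - 1, hik⟩)
      refine ⟨Function.update x ⟨m - 1, hik⟩ (x ⟨m - 1, hik⟩ + 1),
        torus_adj_up d k hk2 x _, hgoal _ ?_⟩
      rw [sum_wfun_update, hp]
      have hcast : ((((⟨m - 1, hik⟩ : Fin d) : ℕ) + 1 : ℕ) : ZMod (2 * d)) = e := by
        simp only [Fin.val_mk]
        rw [show m - 1 + 1 = m from by omega]
        exact hme
      rw [hcast]; ring
    · have hdm : d < m := by omega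
      have hik : 2 * d - m - 1 < d := by omega
      have hni : ((⟨2 * d - m - 1, hik⟩ : Fin d) : ℕ) < d - 1 := by
        simp only [Fin.val_mk]; omega
      obtain ⟨-, hq⟩ := wfun_rest d hd k hlast hrest ⟨2 * d - m - 1, hik⟩ hni (x ⟨2 * d - m - 1, hik⟩)
      refine ⟨Function.update x ⟨2 * d - m - 1, hik⟩ (x ⟨2 * d - m - 1, hik⟩ - 1),
        torus_adj_down d k hk2 x _, hgoal _ ?_⟩
      rw [sum_wfun_update, hq]
      have hcast : ((((⟨2 * d - m - 1, hik⟩ : Fin d) : ℕ) + 1 : ℕ) : ZMod (2 * d)) = -e := by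
        simp only [Fin.val_mk]
        rw [show 2 * d - m - 1 + 1 = 2 * d - m from by omega]
        have hsum : (((2 * d - m : ℕ) : ZMod (2 * d))) + ((m : ℕ) : ZMod (2 * d)) = 0 := by
          rw [← Nat.cast_add, show 2 * d - m + m = 2 * d from by omega, ZMod.natCast_self]
        rw [← hme]
        linear_combination hsum
      rw [hcast]; ring

theorem totalDomatic_torus (d : ℕ) (hd : 0 < d) (k : Fin d → ℕ)
    (hpos : ∀ i, 0 < k i) [∀ i, NeZero (k i)]
    (hlast : 4 ∣ k ⟨d - 1, by omega⟩)
    (hrest : ∀ i : Fin d, (i : ℕ) < d - 1 → 2 * d ∣ k i) :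
    totalDomaticNumber (torusGraph d k) = 2 * d ∧
    totalDominationNumber (torusGraph d k) = (∏ i, k i) / (2 * d) := by
  classical
  haveI : NeZero (2 * d) := ⟨by omega⟩
  set G := torusGraph d k with hG
  obtain ⟨F, hF⟩ := torus_exists_coloring d hd k hpos hlast hrest
  set f : (∀ i, ZMod (k i)) → Fin (2 * d) := fun x => ⟨(F x).val, ZMod.val_lt _⟩ with hf
  have hfdom : IsTotalDomaticColoring G (2 * d) f := by
    intro v c
    obtain ⟨u, hadj, hFu⟩ := hF v (((c : ℕ) : ZMod (2 * d)))
    refine ⟨u, hadj, ?_⟩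
    apply Fin.ext
    simp only [hf, hFu]
    exact ZMod.val_cast_of_lt c.isLt
  -- upper bound for total domatic colorings
  have hub : ∀ n ∈ {n | ∃ g : (∀ i, ZMod (k i)) → Fin n, IsTotalDomaticColoring G n g},
      n ≤ 2 * d := by
    rintro n ⟨g, hg⟩
    obtain ⟨S, hS1, hS2⟩ := torus_nbr d k (fun _ => 0)
    choose wit hw1 hw2 using hg (fun _ => 0)
    have hinj : Set.InjOn wit (Finset.univ : Finset (Fin n)) := by
      intro a _ b _ hab
      rw [← hw2 a, ← hw2 b, hab]
    have hcard : (Finset.univ : Finset (Fin n)).card ≤ S.card :=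
      Finset.card_le_card_of_injOn wit (fun c _ => hS2 _ (hw1 c)) hinj
    simpa using hcard.trans hS1
  have part1 : totalDomaticNumber G = 2 * d := by
    have hmem : 2 * d ∈ {n | ∃ g : (∀ i, ZMod (k i)) → Fin n, IsTotalDomaticColoring G n g} :=
      ⟨f, hfdom⟩
    exact le_antisymm (csSup_le ⟨_, hmem⟩ hub) (le_csSup ⟨2 * d, hub⟩ hmem)
  have hcardV : Fintype.card (∀ i, ZMod (k i)) = ∏ i, k i := by
    simp [Fintype.card_pi, ZMod.card]
  have hdvd : 2 * d ∣ ∏ i, k i := by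
    rcases Nat.lt_or_ge 1 d with hd2 | hd1
    · have h0 : ((⟨0, by omega⟩ : Fin d) : ℕ) < d - 1 := by simp only [Fin.val_mk]; omega
      exact (hrest _ h0).trans (Finset.dvd_prod_of_mem k (Finset.mem_univ _))
    · have h2 : (2 * d : ℕ) = 2 := by omega
      have : (2 * d : ℕ) ∣ 4 := by rw [h2]; norm_num
      exact (this.trans hlast).trans (Finset.dvd_prod_of_mem k (Finset.mem_univ _))
  set n := ∏ i, k i with hn
  set m := n / (2 * d) with hmdef
  have hmn : 2 * d * m = n := Nat.mul_div_cancel' hdvd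
  have hlow : ∀ D : Finset (∀ i, ZMod (k i)), IsTotalDominatingSet G ↑D → m ≤ D.card := by
    intro D hD
    choose S hS1 hS2 using torus_nbr d k
    have hsub : (Finset.univ : Finset (∀ i, ZMod (k i))) ⊆ D.biUnion S := by
      intro v _
      obtain ⟨u, hu, hadj⟩ := hD v
      exact Finset.mem_biUnion.mpr ⟨u, hu, hS2 u v hadj.symm⟩
    have hle : n ≤ D.card * (2 * d) := by
      calc n = (Finset.univ : Finset (∀ i, ZMod (k i))).card := by
              rw [Finset.card_univ, hcardV]
        _ ≤ (D.biUnion S).card := Finset.card_le_card hsub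
        _ ≤ ∑ u ∈ D, (S u).card := Finset.card_biUnion_le
        _ ≤ D.card * (2 * d) := by
              have := Finset.sum_le_card_nsmul D (fun u => (S u).card) (2 * d)
                (fun u _ => hS1 u)
              simpa [smul_eq_mul] using this
    calc m = n / (2 * d) := rfl
      _ ≤ (D.card * (2 * d)) / (2 * d) := Nat.div_le_div_right hle
      _ = D.card := Nat.mul_div_cancel _ (by omega)
  have hclass : ∃ c : Fin (2 * d),
      (Finset.univ.filter fun x => f x = c).card ≤ m := by
    by_contra hcon
    push_neg at hcon
    have hsum : ∑ c : Fin (2 * d), (Finset.univ.filter fun x => f x = c).card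
        = Fintype.card (∀ i, ZMod (k i)) := by
      rw [← Finset.card_univ]
      exact (Finset.card_eq_sum_card_fiberwise (fun x _ => Finset.mem_univ (f x))).symm
    have hge : ∀ c ∈ (Finset.univ : Finset (Fin (2 * d))),
        m + 1 ≤ (Finset.univ.filter fun x => f x = c).card := fun c _ => hcon c
    have := Finset.card_nsmul_le_sum Finset.univ
      (fun c => (Finset.univ.filter fun x => f x = c).card) (m + 1) hge
    simp only [Finset.card_univ, Fintype.card_fin, smul_eq_mul] at this
    have hfin : 2 * d * (m + 1) ≤ n := by
      calc 2 * d * (m + 1) ≤ ∑ c : Fin (2 * d), (Finset.univ.filter fun x => f x = c).card :=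
            this
        _ = Fintype.card (∀ i, ZMod (k i)) := hsum
        _ = n := hcardV
    rw [Nat.mul_add, mul_one, hmn] at hfin
    omega
  obtain ⟨c0, hc0⟩ := hclass
  set D0 := Finset.univ.filter fun x => f x = c0 with hD0def
  have hD0 : IsTotalDominatingSet G ↑D0 := by
    intro v
    obtain ⟨u, hadj, hu⟩ := hfdom v c0
    exact ⟨u, by simp [hD0def, hu], hadj⟩
  have hD0card : D0.card = m := le_antisymm hc0 (hlow D0 hD0)
  have part2 : totalDominationNumber G = m := by
    have hmem : m ∈ {n' | ∃ D : Finset (∀ i, ZMod (k i)),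
        D.card = n' ∧ IsTotalDominatingSet G ↑D} := ⟨D0, hD0card, hD0⟩
    refine le_antisymm (csInf_le (OrderBot.bddBelow _) hmem) (le_csInf ⟨m, hmem⟩ ?_)
    rintro b ⟨D, rfl, hD⟩
    exact hlow D hD
  exact ⟨part1, part2⟩
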